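/- arXiv:2206.03475 — 4 statements merged into one kernel-verified Lean document; each statement's English description precedes it below -/
import Mathlib

section
/- Let X be a real Banach space and let x₀ ∈ S_X be a Δ-point. Then for every x₀* ∈ S_{X*} and α > 0 with x₀ ∈ S(x₀*, α) there exist a sequence (x_i)_{i≥1} in S(x₀*, α) and a sequence (x_i*)_{i≥1} in S_{X*} such that x_i*(x₀) > 1 − 1/i for every i ∈ ℕ, and, writing x_0 := x₀ and x_0* := x₀*, one has ‖x_i − x_j‖ ≥ 2 − α and ‖x_i* − x_j*‖ ≥ 2 − α for all i, j ∈ ℕ ∪ {0} with i ≠ j. -/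
open Metric Set Filter NNReal

noncomputable section

/-- The topological dual of a seminormed space `E` (the pre-2025 Mathlib `NormedSpace.Dual`,
with the norm topology on `E`). -/
abbrev NormedSpace.Dual (𝕜 : Type*) [NontriviallyNormedField 𝕜] (E : Type*)
    [SeminormedAddCommGroup E] [NormedSpace 𝕜 E] : Type _ := E →L[𝕜] 𝕜

namespace DeltaPaper

/-! ### Generic Banach space notions -/

variable {X : Type*} [NormedAddCommGroup X] [NormedSpace ℝ X]

/-- `x` is a Daugavet-point: every slice of the unit ball contains, for every `ε > 0`,
an element at distance at least `2 - ε` from `x`. -/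
def IsDaugavetPoint (x : X) : Prop :=
  ∀ (φ : NormedSpace.Dual ℝ X) (α : ℝ), ‖φ‖ = 1 → 0 < α → ∀ ε > 0,
    ∃ y : X, ‖y‖ ≤ 1 ∧ 1 - α < φ y ∧ 2 - ε ≤ ‖x - y‖

/-- `x` is a Δ-point: every slice of the unit ball containing `x` contains, for every
`ε > 0`, an element at distance at least `2 - ε` from `x`. -/
def IsDeltaPoint (x : X) : Prop :=
  ∀ (φ : NormedSpace.Dual ℝ X) (α : ℝ), ‖φ‖ = 1 → 0 < α → 1 - α < φ x → ∀ ε > 0,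
    ∃ y : X, ‖y‖ ≤ 1 ∧ 1 - α < φ y ∧ 2 - ε ≤ ‖x - y‖

/-- `x*` is a w*-Daugavet-point of the dual of `X`. -/
def IsWeakStarDaugavetPoint (f : NormedSpace.Dual ℝ X) : Prop :=
  ∀ (x : X) (α : ℝ), ‖x‖ = 1 → 0 < α → ∀ ε > 0,
    ∃ g : NormedSpace.Dual ℝ X, ‖g‖ ≤ 1 ∧ 1 - α < g x ∧ 2 - ε ≤ ‖f - g‖

/-- `x*` is a w*-Δ-point of the dual of `X`. -/
def IsWeakStarDeltaPoint (f : NormedSpace.Dual ℝ X) : Prop :=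
  ∀ (x : X) (α : ℝ), ‖x‖ = 1 → 0 < α → 1 - α < f x → ∀ ε > 0,
    ∃ g : NormedSpace.Dual ℝ X, ‖g‖ ≤ 1 ∧ 1 - α < g x ∧ 2 - ε ≤ ‖f - g‖

/-- `x` is a denting point of the unit ball: it lies in slices of the unit ball of
arbitrarily small diameter. -/
def IsDentingPoint (x : X) : Prop :=
  ‖x‖ ≤ 1 ∧ ∀ ε > 0, ∃ (φ : NormedSpace.Dual ℝ X) (α : ℝ), ‖φ‖ = 1 ∧ 0 < α ∧
    1 - α < φ x ∧ Metric.diam {y : X | ‖y‖ ≤ 1 ∧ 1 - α < φ y} < ε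

/-- The Kuratowski measure of non-compactness of a set: the infimum of all `ε > 0`
such that the set can be covered by finitely many sets of diameter less than `ε`. -/
def kuratowski {Y : Type*} [PseudoMetricSpace Y] (A : Set Y) : ℝ :=
  sInf {ε : ℝ | 0 < ε ∧ ∃ 𝒞 : Finset (Set Y), (A ⊆ ⋃ B ∈ 𝒞, B) ∧ ∀ B ∈ 𝒞, Metric.diam B < ε}

/-! ### The space of Lipschitz functions vanishing at a base point -/

variable {M : Type*} [PseudoMetricSpace M]

/-- The least Lipschitz constant of a function. -/
def lipConst (f : M → ℝ) : ℝ≥0 := sInf {K | LipschitzWith K f}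

theorem lipschitzWith_lipConst {f : M → ℝ} (hf : ∃ K, LipschitzWith K f) :
    LipschitzWith (lipConst f) f := by
  obtain ⟨K₀, hK₀⟩ := hf
  rw [lipschitzWith_iff_dist_le_mul]
  intro x y
  rcases le_or_gt (dist x y) 0 with h | h
  · have h0 : dist x y = 0 := le_antisymm h dist_nonneg
    have := hK₀.dist_le_mul x y
    rw [h0, mul_zero] at this ⊢
    exact this
  · rw [← div_le_iff₀ h]
    have hnn : 0 ≤ dist (f x) (f y) / dist x y := by positivity
    rw [← Real.coe_toNNReal _ hnn, NNReal.coe_le_coe]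
    refine le_csInf ⟨K₀, hK₀⟩ ?_
    intro K hK
    rw [← NNReal.coe_le_coe, Real.coe_toNNReal _ hnn, div_le_iff₀ h]
    exact hK.dist_le_mul x y

theorem lipConst_le {f : M → ℝ} {K : ℝ≥0} (hK : LipschitzWith K f) : lipConst f ≤ K :=
  csInf_le (OrderBot.bddBelow _) hK

theorem lipschitzWith_smul {f : M → ℝ} {K : ℝ≥0} (hK : LipschitzWith K f) (c : ℝ) :
    LipschitzWith (‖c‖₊ * K) (c • f) := by
  rw [lipschitzWith_iff_dist_le_mul] at *
  intro x y
  have : dist ((c • f) x) ((c • f) y) = ‖c‖ * dist (f x) (f y) := by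
    simp only [Pi.smul_apply, smul_eq_mul, Real.dist_eq, ← mul_sub, abs_mul, Real.norm_eq_abs]
  rw [this, NNReal.coe_mul, coe_nnnorm, mul_assoc]
  exact mul_le_mul_of_nonneg_left (hK x y) (norm_nonneg c)

variable (M) in
/-- The submodule of `M → ℝ` consisting of Lipschitz functions vanishing at the
base point `z`. -/
def Lip0 (z : M) : Submodule ℝ (M → ℝ) where
  carrier := {f | (∃ K, LipschitzWith K f) ∧ f z = 0}
  add_mem' := by
    rintro f g ⟨⟨K, hK⟩, hf0⟩ ⟨⟨L, hL⟩, hg0⟩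
    exact ⟨⟨K + L, hK.add hL⟩, by simp [hf0, hg0]⟩
  zero_mem' := ⟨⟨0, LipschitzWith.const' 0⟩, rfl⟩
  smul_mem' := by
    rintro c f ⟨⟨K, hK⟩, hf0⟩
    exact ⟨⟨‖c‖₊ * K, lipschitzWith_smul hK c⟩, by simp [hf0]⟩

variable {z : M}

instance : NormedAddCommGroup ↥(Lip0 M z) :=
  AddGroupNorm.toNormedAddCommGroup
    { toFun := fun f => ((lipConst (f : M → ℝ) : ℝ≥0) : ℝ)
      map_zero' := by
        have h0 : lipConst (0 : M → ℝ) = 0 :=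
          le_antisymm (lipConst_le (by simpa using LipschitzWith.const' (0 : ℝ))) bot_le
        show ((lipConst ((0 : ↥(Lip0 M z)) : M → ℝ) : ℝ≥0) : ℝ) = 0
        rw [show ((0 : ↥(Lip0 M z)) : M → ℝ) = 0 from rfl, h0, NNReal.coe_zero]
      add_le' := by
        intro f g
        have hf := lipschitzWith_lipConst f.2.1
        have hg := lipschitzWith_lipConst g.2.1
        have : lipConst ((f + g : ↥(Lip0 M z)) : M → ℝ) ≤
            lipConst (f : M → ℝ) + lipConst (g : M → ℝ) := by
          refine lipConst_le ?_
          have := hf.add hg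
          exact this
        exact_mod_cast this
      neg' := by
        intro f
        show ((lipConst ((-f : ↥(Lip0 M z)) : M → ℝ) : ℝ≥0) : ℝ) = _
        rw [show ((-f : ↥(Lip0 M z)) : M → ℝ) = -(f : M → ℝ) from rfl]
        unfold lipConst
        congr 2
        ext K
        exact ⟨fun hK => by simpa using hK.neg, fun hK => hK.neg⟩
      eq_zero_of_map_eq_zero' := by
        intro f hf
        replace hf : ((lipConst (f : M → ℝ) : ℝ≥0) : ℝ) = 0 := hf
        have h0 : lipConst (f : M → ℝ) = 0 := by exact_mod_cast hf
        have hl : LipschitzWith 0 (f : M → ℝ) := h0 ▸ lipschitzWith_lipConst f.2.1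
        ext x
        have := hl.dist_le_mul x z
        simp only [NNReal.coe_zero, zero_mul] at this
        have hxz : (f : M → ℝ) x = (f : M → ℝ) z :=
          dist_le_zero.mp this
        simpa [f.2.2] using hxz }

theorem Lip0.norm_def (f : ↥(Lip0 M z)) : ‖f‖ = ((lipConst (f : M → ℝ) : ℝ≥0) : ℝ) := rfl

theorem Lip0.lipschitzWith (f : ↥(Lip0 M z)) : LipschitzWith (lipConst (f : M → ℝ)) (f : M → ℝ) :=
  lipschitzWith_lipConst f.2.1

instance : NormedSpace ℝ ↥(Lip0 M z) where
  norm_smul_le c f := by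
    have : lipConst ((c • f : ↥(Lip0 M z)) : M → ℝ) ≤ ‖c‖₊ * lipConst (f : M → ℝ) :=
      lipConst_le (lipschitzWith_smul (Lip0.lipschitzWith f) c)
    calc ‖c • f‖ = ((lipConst ((c • f : ↥(Lip0 M z)) : M → ℝ) : ℝ≥0) : ℝ) := rfl
      _ ≤ ((‖c‖₊ * lipConst (f : M → ℝ) : ℝ≥0) : ℝ) := by exact_mod_cast this
      _ = ‖c‖ * ‖f‖ := by push_cast [Lip0.norm_def]; rfl

variable (M z) in
/-- The evaluation functional `δ_x ∈ Lip₀(M)*`. -/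
def evalδ (x : M) : NormedSpace.Dual ℝ ↥(Lip0 M z) :=
  LinearMap.mkContinuous
    { toFun := fun f => (f : M → ℝ) x
      map_add' := fun f g => rfl
      map_smul' := fun c f => rfl }
    (dist x z)
    (by
      intro f
      have := (Lip0.lipschitzWith f).dist_le_mul x z
      simp only [f.2.2, Real.dist_eq, sub_zero] at this
      calc ‖(f : M → ℝ) x‖ = |(f : M → ℝ) x - 0| := by simp
        _ ≤ (lipConst (f : M → ℝ) : ℝ) * dist x z := by
            simpa [f.2.2, Real.dist_eq] using (Lip0.lipschitzWith f).dist_le_mul x z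
        _ = dist x z * ‖f‖ := by rw [Lip0.norm_def, mul_comm])

variable (M z) in
/-- The Lipschitz-free space over `M`: the closed linear span of the evaluation
functionals inside `Lip₀(M)*`. -/
def FreeSpace : Submodule ℝ (NormedSpace.Dual ℝ ↥(Lip0 M z)) :=
  (Submodule.span ℝ (Set.range (evalδ M z))).topologicalClosure

variable (M z) in
/-- The molecule `m_{x y} = (δ_x - δ_y)/d(x,y)` as an element of `Lip₀(M)*`. -/
def molecule (x y : M) : NormedSpace.Dual ℝ ↥(Lip0 M z) :=
  (dist x y)⁻¹ • (evalδ M z x - evalδ M z y)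

theorem molecule_mem_freeSpace (x y : M) : molecule M z x y ∈ FreeSpace M z :=
  Submodule.le_topologicalClosure _
    (Submodule.smul_mem _ _ (Submodule.sub_mem _
      (Submodule.subset_span ⟨x, rfl⟩) (Submodule.subset_span ⟨y, rfl⟩)))

variable (M z) in
/-- The molecule `m_{x y}` as an element of the free space `F(M)`. -/
def mol (x y : M) : ↥(FreeSpace M z) := ⟨molecule M z x y, molecule_mem_freeSpace x y⟩

variable (M) in
/-- A metric space is uniformly discrete if distances between distinct points are
bounded below by a positive constant. -/
def UniformlyDiscrete : Prop := ∃ θ > (0:ℝ), ∀ x y : M, x ≠ y → θ ≤ dist x y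

/-- A norm-one Lipschitz function is local if its Lipschitz constant is approximated
on pairs of arbitrarily close points. -/
def IsLocal (f : ↥(Lip0 M z)) : Prop :=
  ∀ ε > 0, ∃ u v : M, u ≠ v ∧
    ‖f‖ - ε < ((f : M → ℝ) u - (f : M → ℝ) v) / dist u v ∧ dist u v < ε

/-- `f ∈ S_{Lip₀(M)}` is a w*-Daugavet-point: for every w*-slice `S(μ, α)` of
`B_{Lip₀(M)}` (`μ` a norm-one element of `F(M)`) and every `ε > 0` there is `g` in the
slice with `‖f - g‖ ≥ 2 - ε`. -/
def IsLipWeakStarDaugavetPoint (f : ↥(Lip0 M z)) : Prop :=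
  ∀ μ : NormedSpace.Dual ℝ ↥(Lip0 M z), μ ∈ FreeSpace M z → ‖μ‖ = 1 → ∀ α > (0:ℝ), ∀ ε > (0:ℝ),
    ∃ g : ↥(Lip0 M z), ‖g‖ ≤ 1 ∧ 1 - α < μ g ∧ 2 - ε ≤ ‖f - g‖

/-- `f ∈ S_{Lip₀(M)}` is a w*-Δ-point: the same as above, but only for w*-slices
containing `f`. -/
def IsLipWeakStarDeltaPoint (f : ↥(Lip0 M z)) : Prop :=
  ∀ μ : NormedSpace.Dual ℝ ↥(Lip0 M z), μ ∈ FreeSpace M z → ‖μ‖ = 1 → ∀ α > (0:ℝ),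
    1 - α < μ f → ∀ ε > (0:ℝ),
    ∃ g : ↥(Lip0 M z), ‖g‖ ≤ 1 ∧ 1 - α < μ g ∧ 2 - ε ≤ ‖f - g‖

end DeltaPaper

open DeltaPaper NormedSpace

namespace Statement0Aux

open Classical in
noncomputable def buildSeq {β : Type*} (b : β) (Q : ℕ → (ℕ → β) → β → Prop) : ℕ → ℕ → β
  | 0 => fun _ => b
  | (m + 1) => Function.update (buildSeq b Q m) (m + 1)
      (if h : ∃ y, Q (m + 1) (buildSeq b Q m) y then h.choose else b)

theorem buildSeq_agree {β : Type*} (b : β) (Q : ℕ → (ℕ → β) → β → Prop) :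
    ∀ m j, j ≤ m → buildSeq b Q m j = buildSeq b Q j j := by
  intro m
  induction m with
  | zero => intro j hj; rw [Nat.le_zero.mp hj]
  | succ m ih =>
    intro j hj
    rcases Nat.lt_or_ge j (m + 1) with h | h
    · rw [show buildSeq b Q (m+1) j = buildSeq b Q m j by
        rw [buildSeq, Function.update_of_ne (by omega)]]
      exact ih j (by omega)
    · have : j = m + 1 := le_antisymm hj h
      subst this; rfl

theorem exists_seq_aux {β : Type*} (b : β) (Q : ℕ → (ℕ → β) → β → Prop)
    (hdep : ∀ n (f g : ℕ → β) y, (∀ j, j < n → f j = g j) → Q n f y → Q n g y)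
    (H : ∀ n, 1 ≤ n → ∀ f : ℕ → β, f 0 = b →
      (∀ j, 1 ≤ j → j < n → Q j f (f j)) → ∃ y, Q n f y) :
    ∃ f : ℕ → β, f 0 = b ∧ ∀ n, 1 ≤ n → Q n f (f n) := by
  set f : ℕ → β := fun n => buildSeq b Q n n with hf
  have hf0 : f 0 = b := rfl
  refine ⟨f, hf0, ?_⟩
  have main : ∀ n, 1 ≤ n → Q n f (f n) := by
    intro n
    induction n using Nat.strong_induction_on with
    | _ n ih =>
      intro hn
      obtain ⟨m, rfl⟩ : ∃ m, n = m + 1 := ⟨n - 1, by omega⟩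
      have hagree : ∀ j, j < m + 1 → f j = buildSeq b Q m j := by
        intro j hj
        exact (buildSeq_agree b Q m j (by omega)).symm
      have hex : ∃ y, Q (m + 1) f y :=
        H (m + 1) hn f hf0 (fun j h1 h2 => ih j h2 h1)
      have hex' : ∃ y, Q (m + 1) (buildSeq b Q m) y :=
        ⟨hex.choose, hdep _ f _ _ hagree hex.choose_spec⟩
      have hval : f (m + 1) = hex'.choose := by
        show buildSeq b Q (m + 1) (m + 1) = _
        rw [buildSeq, Function.update_self, dif_pos hex']
      rw [hval]
      exact hdep _ (buildSeq b Q m) f _ (fun j hj => (hagree j hj).symm) hex'.choose_spec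
  exact main


variable {X : Type*} [NormedAddCommGroup X] [NormedSpace ℝ X]

/-- The invariant carried along the recursive construction in `statement0`. -/
def GoodPt (x₀ : X) (L : ℝ) (eps : ℕ → ℝ) (n : ℕ) (f : ℕ → X × Dual ℝ X)
    (p : X × Dual ℝ X) : Prop :=
  ‖p.1‖ ≤ 1 ∧ ‖p.2‖ = 1 ∧ 1 - eps n ≤ p.2 x₀ ∧ p.2 p.1 ≤ eps n - 1 ∧
    2 - eps n ≤ ‖x₀ - p.1‖ ∧ ∀ j, j < n → L ≤ (f j).2 p.1

theorem pair_bound (g : Dual ℝ X) (v : X) (hg : ‖g‖ ≤ 1) (hv : ‖v‖ ≤ 1) :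
    -1 ≤ g v ∧ g v ≤ 1 := by
  have h1 : ‖g v‖ ≤ 1 := le_trans (g.le_opNorm v) (by nlinarith [norm_nonneg g])
  rw [Real.norm_eq_abs, abs_le] at h1
  exact h1

theorem step_exists (x₀ : X) (hx₀ : ‖x₀‖ = 1) (hΔ : IsDeltaPoint x₀)
    (φ₀ : Dual ℝ X) (hφ₀ : ‖φ₀‖ = 1) (δ : ℝ) (hδ : 0 < δ) (eps : ℕ → ℝ)
    (heps_pos : ∀ j, 1 ≤ j → 0 < eps j)
    (heps64 : ∀ j, 1 ≤ j → eps j ≤ δ / 64)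
    (heps4 : ∀ j, 1 ≤ j → eps j ≤ 1 / 4)
    (hsum : ∀ n : ℕ, ∑ j ∈ Finset.Ico 1 n, eps j ≤ δ / 16)
    (n : ℕ) (hn : 1 ≤ n) (f : ℕ → X × Dual ℝ X) (hf0 : f 0 = (x₀, φ₀))
    (hprev : ∀ j, 1 ≤ j → j < n → GoodPt x₀ (φ₀ x₀ - δ / 2) eps j f (f j)) :
    ∃ p, GoodPt x₀ (φ₀ x₀ - δ / 2) eps n f p := by
  have hlb : -1 ≤ φ₀ x₀ := (pair_bound φ₀ x₀ hφ₀.le hx₀.le).1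
  have hub : φ₀ x₀ ≤ 1 := (pair_bound φ₀ x₀ hφ₀.le hx₀.le).2
  have hφnorm : ∀ j, j < n → ‖(f j).2‖ = 1 := by
    intro j hj
    rcases Nat.eq_zero_or_pos j with rfl | hj1
    · rw [hf0]; exact hφ₀
    · exact (hprev j hj1 hj).2.1
  have hφx₀ : ∀ j, 1 ≤ j → j < n → 1 - eps j ≤ (f j).2 x₀ :=
    fun j h1 h2 => (hprev j h1 h2).2.2.1
  set Ψ : Dual ℝ X := (∑ j ∈ Finset.range n, (f j).2) + (f (n - 1)).2 with hΨdef
  have hΨx₀ : Ψ x₀ = (∑ j ∈ Finset.range n, (f j).2 x₀) + (f (n - 1)).2 x₀ := by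
    simp [hΨdef, ContinuousLinearMap.sum_apply]
  have hsum_lb : (φ₀ x₀) + ((n : ℝ) - 1) - δ / 16 ≤ ∑ j ∈ Finset.range n, (f j).2 x₀ := by
    rw [Finset.range_eq_Ico, Finset.sum_eq_sum_Ico_succ_bot (by omega : 0 < n)]
    have h1 : ∑ j ∈ Finset.Ico 1 n, (1 - eps j) ≤ ∑ j ∈ Finset.Ico 1 n, (f j).2 x₀ :=
      Finset.sum_le_sum fun j hj => hφx₀ j (Finset.mem_Ico.mp hj).1 (Finset.mem_Ico.mp hj).2
    have h2 : ∑ j ∈ Finset.Ico 1 n, (1 - eps j) =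
        ((n : ℝ) - 1) - ∑ j ∈ Finset.Ico 1 n, eps j := by
      rw [Finset.sum_sub_distrib, Finset.sum_const, Nat.card_Ico, nsmul_eq_mul, mul_one]
      have hcast : ((n - 1 : ℕ) : ℝ) = (n : ℝ) - 1 := by
        have h : 1 ≤ n := hn; push_cast [h]; ring
      rw [hcast]
    have h3 := hsum n
    rw [hf0]
    show φ₀ x₀ + ((n : ℝ) - 1) - δ / 16 ≤ φ₀ x₀ + ∑ j ∈ Finset.Ico 1 n, (f j).2 x₀
    rw [h2] at h1
    linarith
  have hΨpos : 0 < ‖Ψ‖ := by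
    rcases Nat.lt_or_ge n 2 with h2 | h2
    · have hn1 : n = 1 := by omega
      subst hn1
      have : Ψ = (2 : ℝ) • φ₀ := by
        rw [hΨdef, Finset.sum_range_one, hf0, two_smul]
      rw [this, norm_smul, hφ₀]
      norm_num
    · have hx : (1 : ℝ) / 2 ≤ Ψ x₀ := by
        rw [hΨx₀]
        have hA : (φ₀ x₀) + ((n : ℝ) - 1) * (3 / 4) ≤ ∑ j ∈ Finset.range n, (f j).2 x₀ := by
          rw [Finset.range_eq_Ico, Finset.sum_eq_sum_Ico_succ_bot (by omega : 0 < n), hf0]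
          show φ₀ x₀ + ((n : ℝ) - 1) * (3 / 4) ≤ φ₀ x₀ + ∑ j ∈ Finset.Ico 1 n, (f j).2 x₀
          have h1 : ∑ j ∈ Finset.Ico 1 n, (3 / 4 : ℝ) ≤ ∑ j ∈ Finset.Ico 1 n, (f j).2 x₀ := by
            refine Finset.sum_le_sum fun j hj => ?_
            obtain ⟨hj1, hj2⟩ := Finset.mem_Ico.mp hj
            have := hφx₀ j hj1 hj2
            have := heps4 j hj1
            linarith
          rw [Finset.sum_const, Nat.card_Ico, nsmul_eq_mul] at h1
          have hcast : ((n - 1 : ℕ) : ℝ) = (n : ℝ) - 1 := by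
            have h : 1 ≤ n := hn; push_cast [h]; ring
          rw [hcast] at h1
          linarith
        have hB : (3 / 4 : ℝ) ≤ (f (n - 1)).2 x₀ := by
          have h1 := hφx₀ (n - 1) (by omega) (by omega)
          have h2 := heps4 (n - 1) (by omega)
          linarith
        have hcast : (2 : ℝ) ≤ (n : ℝ) := by exact_mod_cast h2
        nlinarith
      have : Ψ x₀ ≠ 0 := by linarith
      have hne : Ψ ≠ 0 := fun h => by simp [h] at this
      exact norm_pos_iff.mpr hne
  set t : ℝ := ‖Ψ‖ with htdef
  have htne : t ≠ 0 := ne_of_gt hΨpos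
  set ψh : Dual ℝ X := t⁻¹ • Ψ with hψhdef
  have hψh : ‖ψh‖ = 1 := by
    rw [hψhdef, norm_smul, norm_inv, Real.norm_eq_abs, abs_of_pos hΨpos]
    field_simp
    exact htdef.symm
  have hψhx₀ : ψh x₀ ≤ 1 := (pair_bound ψh x₀ hψh.le hx₀.le).2
  have hepsn := heps_pos n hn
  have hq : 0 < eps n / t := div_pos hepsn hΨpos
  obtain ⟨y, hy1, hy2, hy3⟩ := hΔ ψh (1 - ψh x₀ + eps n / t) hψh (by linarith)
    (by linarith) (eps n) hepsn
  have hψhy : ψh y = t⁻¹ * Ψ y := by simp [hψhdef]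
  have hψhx₀' : ψh x₀ = t⁻¹ * Ψ x₀ := by simp [hψhdef]
  have hΨy : Ψ x₀ - eps n < Ψ y := by
    have h1 : t * (1 - (1 - ψh x₀ + eps n / t)) < t * ψh y :=
      mul_lt_mul_of_pos_left hy2 hΨpos
    rw [hψhy, hψhx₀'] at h1
    have e1 : t * (1 - (1 - t⁻¹ * Ψ x₀ + eps n / t)) = Ψ x₀ - eps n := by
      field_simp; ring
    have e2 : t * (t⁻¹ * Ψ y) = Ψ y := by field_simp
    rw [e1, e2] at h1
    exact h1
  -- main estimate
  have hkey : ∀ k, k < n → φ₀ x₀ - δ / 2 ≤ (f k).2 y := by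
    intro k hk
    rcases Nat.lt_or_ge n 2 with hsmall | h2
    · have hn1 : n = 1 := by omega
      have hk0 : k = 0 := by omega
      subst hn1; subst hk0
      have hΨeq : ∀ v, Ψ v = φ₀ v + φ₀ v := by
        intro v
        simp [hΨdef, Finset.sum_range_one, hf0, ContinuousLinearMap.add_apply]
      have h1 := hΨy
      rw [hΨeq x₀, hΨeq y] at h1
      have h64 := heps64 1 le_rfl
      rw [hf0]
      show φ₀ x₀ - δ / 2 ≤ φ₀ y
      linarith
    · -- n ≥ 2
      have hyb : ∀ j, j < n → (f j).2 y ≤ 1 := fun j hj =>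
        (pair_bound _ y (hφnorm j hj).le hy1).2
      have hΨyval : Ψ y = (∑ j ∈ Finset.range n, (f j).2 y) + (f (n - 1)).2 y := by
        simp [hΨdef, ContinuousLinearMap.sum_apply]
      have hsplit : ∑ j ∈ Finset.range n, (f j).2 y
          = (f k).2 y + ∑ j ∈ (Finset.range n).erase k, (f j).2 y :=
        (Finset.add_sum_erase _ _ (Finset.mem_range.mpr hk)).symm
      have herase : ∑ j ∈ (Finset.range n).erase k, (f j).2 y ≤ (n : ℝ) - 1 := by
        have h1 : ∑ j ∈ (Finset.range n).erase k, (f j).2 y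
            ≤ ∑ j ∈ (Finset.range n).erase k, (1 : ℝ) :=
          Finset.sum_le_sum fun j hj =>
            hyb j (Finset.mem_range.mp (Finset.mem_of_mem_erase hj))
        rw [Finset.sum_const, Finset.card_erase_of_mem (Finset.mem_range.mpr hk),
          Finset.card_range] at h1
        have hcast : ((n - 1 : ℕ) : ℝ) = (n : ℝ) - 1 := by
          have : 1 ≤ n := hn; push_cast [this]; ring
        simpa [hcast] using h1
      have hlast : (f (n - 1)).2 y ≤ 1 := hyb (n - 1) (by omega)
      have hlastx₀ : 1 - eps (n - 1) ≤ (f (n - 1)).2 x₀ := hφx₀ (n - 1) (by omega) (by omega)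
      have h64a := heps64 (n - 1) (by omega)
      have h64b := heps64 n hn
      -- Ψ x₀ ≥ φ₀ x₀ + n - δ/16 - eps (n-1)
      have hΨx₀lb : (φ₀ x₀) + (n : ℝ) - δ / 16 - eps (n - 1) ≤ Ψ x₀ := by
        rw [hΨx₀]; linarith
      -- Ψ y ≤ f k y + n
      have hΨyub : Ψ y ≤ (f k).2 y + (n : ℝ) := by
        rw [hΨyval, hsplit]; linarith
      linarith
  -- the norming functional
  have hnorm_pos : (0 : ℝ) < ‖x₀ - y‖ := by
    have := heps4 n hn
    linarith
  have hne : x₀ - y ≠ 0 := by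
    intro h; rw [h, norm_zero] at hnorm_pos; exact lt_irrefl _ hnorm_pos
  obtain ⟨g, hg1, hg2⟩ := exists_dual_vector ℝ (x₀ - y) (norm_ne_zero_iff.mpr hne)
  have hg2' : g x₀ - g y = ‖x₀ - y‖ := by
    rw [← map_sub]
    simpa using hg2
  have hgx₀ : g x₀ ≤ 1 := (pair_bound g x₀ hg1.le hx₀.le).2
  have hgy : -1 ≤ g y := (pair_bound g y hg1.le hy1).1
  refine ⟨(y, g), hy1, hg1, ?_, ?_, hy3, hkey⟩
  · show 1 - eps n ≤ g x₀
    linarith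
  · show g y ≤ eps n - 1
    linarith

end Statement0Aux


/-- Proposition 2.1. If `x₀ ∈ S_X` is a Δ-point, then for every slice
`S(x₀*, α)` of `B_X` containing `x₀` there are sequences `(x_i)_{i ≥ 1}` in `S(x₀*, α)` and
`(x_i*)_{i ≥ 1}` in `S_{X*}` with `x_i*(x₀) > 1 - 1/i`, and, setting `x_0 = x₀`,
`x_0* = x₀*`, one has `‖x_i - x_j‖ ≥ 2 - α` and `‖x_i* - x_j*‖ ≥ 2 - α` for `i ≠ j`. -/
theorem statement0 {X : Type*} [NormedAddCommGroup X] [NormedSpace ℝ X] [CompleteSpace X]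
    (x₀ : X) (hx₀ : ‖x₀‖ = 1) (hΔ : IsDeltaPoint x₀)
    (φ₀ : Dual ℝ X) (α : ℝ) (hφ₀ : ‖φ₀‖ = 1) (hα : 0 < α) (hmem : 1 - α < φ₀ x₀) :
    ∃ (x : ℕ → X) (φ : ℕ → Dual ℝ X),
      x 0 = x₀ ∧ φ 0 = φ₀ ∧
      (∀ i, 1 ≤ i → ‖x i‖ ≤ 1 ∧ 1 - α < φ₀ (x i)) ∧
      (∀ i, 1 ≤ i → ‖φ i‖ = 1 ∧ 1 - 1 / (i : ℝ) < φ i x₀) ∧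
      (∀ i j, i ≠ j → 2 - α ≤ ‖x i - x j‖) ∧
      (∀ i j, i ≠ j → 2 - α ≤ ‖φ i - φ j‖) := by
    classical
  obtain ⟨hlb, hub⟩ := Statement0Aux.pair_bound φ₀ x₀ hφ₀.le hx₀.le
  set δ : ℝ := α - (1 - φ₀ x₀) with hδdef
  have hδ : 0 < δ := by simp only [hδdef]; linarith
  have hδα : δ ≤ α := by simp only [hδdef]; linarith
  set eps : ℕ → ℝ := fun j => min (δ / 32 * (1 / 2) ^ j) (1 / (4 * (j : ℝ))) with hepsdef
  have heps_pos : ∀ j : ℕ, 1 ≤ j → 0 < eps j := by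
    intro j hj
    have hj' : (0 : ℝ) < j := by exact_mod_cast hj
    refine lt_min (by positivity) (by positivity)
  have heps64 : ∀ j : ℕ, 1 ≤ j → eps j ≤ δ / 64 := by
    intro j hj
    refine le_trans (min_le_left _ _) ?_
    have h1 : ((1 : ℝ) / 2) ^ j ≤ (1 / 2) ^ 1 :=
      pow_le_pow_of_le_one (by norm_num) (by norm_num) hj
    have h2 : (0 : ℝ) < δ / 32 := by positivity
    nlinarith
  have heps4 : ∀ j : ℕ, 1 ≤ j → eps j ≤ 1 / 4 := by
    intro j hj
    refine le_trans (min_le_right _ _) ?_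
    have hj' : (1 : ℝ) ≤ j := by exact_mod_cast hj
    rw [div_le_div_iff₀ (by linarith) (by norm_num)]
    linarith
  have hsum : ∀ n : ℕ, ∑ j ∈ Finset.Ico 1 n, eps j ≤ δ / 16 := by
    intro n
    calc ∑ j ∈ Finset.Ico 1 n, eps j ≤ ∑ j ∈ Finset.Ico 1 n, δ / 32 * (1 / 2) ^ j :=
          Finset.sum_le_sum fun j _ => min_le_left _ _
      _ ≤ ∑ j ∈ Finset.range n, δ / 32 * (1 / 2) ^ j := by
          refine Finset.sum_le_sum_of_subset_of_nonneg ?_ fun j _ _ => by positivity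
          rw [Finset.range_eq_Ico]
          exact Finset.Ico_subset_Ico (by omega) le_rfl
      _ = δ / 32 * ∑ j ∈ Finset.range n, (1 / 2) ^ j := by rw [Finset.mul_sum]
      _ ≤ δ / 32 * 2 := by
          have h2 : (0 : ℝ) ≤ δ / 32 := by positivity
          exact mul_le_mul_of_nonneg_left (sum_geometric_two_le n) h2
      _ = δ / 16 := by ring
  have hdep : ∀ n (f g : ℕ → X × Dual ℝ X) y, (∀ j, j < n → f j = g j) →
      Statement0Aux.GoodPt x₀ (φ₀ x₀ - δ / 2) eps n f y →
      Statement0Aux.GoodPt x₀ (φ₀ x₀ - δ / 2) eps n g y := by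
    intro n f g y hfg ⟨h1, h2, h3, h4, h5, h6⟩
    exact ⟨h1, h2, h3, h4, h5, fun j hj => (hfg j hj) ▸ h6 j hj⟩
  obtain ⟨F, hF0, hFQ⟩ := Statement0Aux.exists_seq_aux (x₀, φ₀)
    (Statement0Aux.GoodPt x₀ (φ₀ x₀ - δ / 2) eps) hdep
    (fun n hn f hf0 hprev => Statement0Aux.step_exists x₀ hx₀ hΔ φ₀ hφ₀ δ hδ eps
      heps_pos heps64 heps4 hsum n hn f hf0 hprev)
  have hF01 : (F 0).1 = x₀ := by rw [hF0]
  have hF02 : (F 0).2 = φ₀ := by rw [hF0]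
  refine ⟨fun i => (F i).1, fun i => (F i).2, hF01, hF02, ?_, ?_, ?_, ?_⟩
  · intro i hi
    obtain ⟨h1, h2, h3, h4, h5, h6⟩ := hFQ i hi
    have h7 := h6 0 (by omega)
    rw [hF02] at h7
    exact ⟨h1, by simp only [hδdef] at h7 ⊢; linarith⟩
  · intro i hi
    obtain ⟨h1, h2, h3, h4, h5, h6⟩ := hFQ i hi
    refine ⟨h2, ?_⟩
    have hi' : (1 : ℝ) ≤ i := by exact_mod_cast hi
    have he : eps i ≤ 1 / (4 * (i : ℝ)) := min_le_right _ _
    have hlt : 1 / (4 * (i : ℝ)) < 1 / (i : ℝ) := by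
      rw [div_lt_div_iff₀ (by linarith) (by linarith)]
      linarith
    linarith
  · -- distances between the x's
    have key : ∀ i j, j < i → 2 - α ≤ ‖(F i).1 - (F j).1‖ := by
      intro i j hji
      have hi : 1 ≤ i := by omega
      obtain ⟨h1, h2, h3, h4, h5, h6⟩ := hFQ i hi
      rcases Nat.eq_zero_or_pos j with rfl | hj1
      · rw [hF01, norm_sub_rev]
        have h64 := heps64 i hi
        linarith
      · obtain ⟨g1, g2, g3, g4, g5, g6⟩ := hFQ j hj1
        have hA1 : φ₀ x₀ - δ / 2 ≤ (F j).2 (F i).1 := h6 j hji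
        have h64 := heps64 j hj1
        calc 2 - α ≤ (F j).2 (F i).1 - (F j).2 (F j).1 := by
              simp only [hδdef] at hA1 ⊢; linarith
          _ = (F j).2 ((F i).1 - (F j).1) := (map_sub _ _ _).symm
          _ ≤ ‖(F j).2 ((F i).1 - (F j).1)‖ := le_trans (le_abs_self _) (by rw [Real.norm_eq_abs])
          _ ≤ ‖(F j).2‖ * ‖(F i).1 - (F j).1‖ := ContinuousLinearMap.le_opNorm _ _
          _ = ‖(F i).1 - (F j).1‖ := by rw [g2, one_mul]
    intro i j hij
    rcases Nat.lt_or_ge j i with h | h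
    · exact key i j h
    · have : i < j := by omega
      rw [norm_sub_rev]
      exact key j i this
  · -- distances between the φ's
    have key : ∀ i j, j < i → 2 - α ≤ ‖(F j).2 - (F i).2‖ := by
      intro i j hji
      have hi : 1 ≤ i := by omega
      obtain ⟨h1, h2, h3, h4, h5, h6⟩ := hFQ i hi
      have hA1 : φ₀ x₀ - δ / 2 ≤ (F j).2 (F i).1 := h6 j hji
      have h64 := heps64 i hi
      calc 2 - α ≤ (F j).2 (F i).1 - (F i).2 (F i).1 := by
            simp only [hδdef] at hA1 ⊢; linarith
        _ = ((F j).2 - (F i).2) (F i).1 := by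
            rw [ContinuousLinearMap.sub_apply]
        _ ≤ ‖((F j).2 - (F i).2) (F i).1‖ := le_trans (le_abs_self _) (by rw [Real.norm_eq_abs])
        _ ≤ ‖(F j).2 - (F i).2‖ * ‖(F i).1‖ := ContinuousLinearMap.le_opNorm _ _
        _ ≤ ‖(F j).2 - (F i).2‖ * 1 := by
            exact mul_le_mul_of_nonneg_left h1 (norm_nonneg _)
        _ = ‖(F j).2 - (F i).2‖ := mul_one _
    intro i j hij
    rcases Nat.lt_or_ge j i with h | h
    · rw [norm_sub_rev]
      exact key i j h
    · have : i < j := by omega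
      exact key j i this
end
end

section
/- Let M be a metric space with base point 0 and let f ∈ S_{Lip_0(M)} be a w*-Δ-point. Then for every ε > 0 there exists a sequence of molecules (m_{u_iv_i})_{i∈ℕ} contained in the slice S(f, ε) = {μ ∈ B_{F(M)} : f(μ) > 1 − ε} such that ‖m_{u_iv_i} − m_{u_jv_j}‖ ≥ 2 − ε for all i, j ∈ ℕ with i ≠ j. -/
open Metric Set Filter NNReal

noncomputable section

open DeltaPaper NormedSpace

namespace DeltaPaper

variable {M : Type*} [PseudoMetricSpace M] {z : M}

theorem molecule_apply (x y : M) (F : ↥(Lip0 M z)) :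
    molecule M z x y F = (dist x y)⁻¹ * ((F : M → ℝ) x - (F : M → ℝ) y) := rfl

theorem abs_sub_le_norm (F : ↥(Lip0 M z)) (x y : M) :
    |(F : M → ℝ) x - (F : M → ℝ) y| ≤ ‖F‖ * dist x y := by
  have := (Lip0.lipschitzWith F).dist_le_mul x y
  rwa [Real.dist_eq, ← Lip0.norm_def] at this

theorem norm_molecule_le (x y : M) : ‖molecule M z x y‖ ≤ (1:ℝ) := by
  refine ContinuousLinearMap.opNorm_le_bound _ zero_le_one (fun F => ?_)
  rw [molecule_apply, one_mul]
  rcases eq_or_ne (dist x y) 0 with h | h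
  · simp [h, norm_nonneg]
  · have hd : 0 < dist x y := lt_of_le_of_ne dist_nonneg (Ne.symm h)
    rw [Real.norm_eq_abs, abs_mul, abs_of_nonneg (inv_nonneg.2 hd.le)]
    calc (dist x y)⁻¹ * |(F : M → ℝ) x - (F : M → ℝ) y|
        ≤ (dist x y)⁻¹ * (‖F‖ * dist x y) := by
          exact mul_le_mul_of_nonneg_left (abs_sub_le_norm F x y) (inv_nonneg.2 hd.le)
      _ = ‖F‖ := by field_simp
theorem molecule_apply_sub (a b : M) (f g : ↥(Lip0 M z)) :
    molecule M z a b (f - g) = molecule M z a b f - molecule M z a b g := by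
  rw [molecule_apply, molecule_apply, molecule_apply]
  have h : ((f - g : ↥(Lip0 M z)) : M → ℝ) = (f : M → ℝ) - (g : M → ℝ) := rfl
  rw [h]
  simp only [Pi.sub_apply]
  ring

end DeltaPaper
namespace DeltaPaper

theorem exists_molecule_gt {M : Type*} [MetricSpace M] {z : M} (F : ↥(Lip0 M z)) {c : ℝ}
    (hc : 0 ≤ c) (h : c < ‖F‖) : ∃ x y : M, x ≠ y ∧ c < molecule M z x y F := by
  by_contra hcon
  push_neg at hcon
  have hlip : LipschitzWith c.toNNReal (F : M → ℝ) := by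
    rw [lipschitzWith_iff_dist_le_mul]
    intro x y
    rcases eq_or_ne x y with rfl | hxy
    · simp [Real.toNNReal, dist_nonneg]
    · have hd : 0 < dist x y := dist_pos.2 hxy
      have h1 := hcon x y hxy
      have h2 := hcon y x (Ne.symm hxy)
      rw [molecule_apply] at h1 h2
      rw [dist_comm y x] at h2
      have key : ∀ a : ℝ, (dist x y)⁻¹ * a ≤ c → a ≤ c * dist x y := by
        intro a ha
        have := mul_le_mul_of_nonneg_left ha hd.le
        rw [← mul_assoc, mul_inv_cancel₀ hd.ne', one_mul] at this
        linarith
      rw [Real.dist_eq, Real.coe_toNNReal _ hc, abs_sub_le_iff]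
      exact ⟨key _ h1, key _ h2⟩
  have : ‖F‖ ≤ c := by
    rw [Lip0.norm_def]
    calc ((lipConst (F : M → ℝ) : ℝ≥0) : ℝ) ≤ (c.toNNReal : ℝ) := by
          exact_mod_cast lipConst_le hlip
      _ = c := Real.coe_toNNReal _ hc
  linarith

end DeltaPaper
namespace DeltaPaper

theorem exists_seq_pairs {β : Type*} [Nonempty β] (Q : ℕ → β → Prop) (R : β → β → Prop)
    (H : ∀ (k : ℕ) (w : ℕ → β), (∀ i, i < k → Q i (w i)) →
      ∃ y, Q k y ∧ ∀ i, i < k → R y (w i)) :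
    ∃ w : ℕ → β, (∀ n, Q n (w n)) ∧ ∀ i j, i < j → R (w j) (w i) := by
  classical
  have H' : ∀ (k : ℕ) (w : ℕ → β), ∃ y,
      (∀ i, i < k → Q i (w i)) → Q k y ∧ ∀ i, i < k → R y (w i) := by
    intro k w
    by_cases hw : ∀ i, i < k → Q i (w i)
    · obtain ⟨y, hy⟩ := H k w hw
      exact ⟨y, fun _ => hy⟩
    · exact ⟨Classical.arbitrary β, fun h => absurd h hw⟩
  choose F hF using H'
  let ext : ∀ n, (Fin n → β) → (ℕ → β) := fun n h i =>
    if hi : i < n then h ⟨i, hi⟩ else Classical.arbitrary β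
  let q : ∀ n, Fin n → β := fun n => Nat.rec (motive := fun n => Fin n → β)
    Fin.elim0 (fun n qn => Fin.snoc qn (F n (ext n qn))) n
  have hq : ∀ n, q (n + 1) = Fin.snoc (q n) (F n (ext n (q n))) := fun n => rfl
  set w : ℕ → β := fun n => F n (ext n (q n)) with hw
  have coh : ∀ n i (h : i < n), q n ⟨i, h⟩ = w i := by
    intro n
    induction n with
    | zero => intro i h; omega
    | succ n ih =>
      intro i h
      rcases Nat.lt_or_ge i n with h' | h'
      · have : (⟨i, h⟩ : Fin (n+1)) = Fin.castSucc ⟨i, h'⟩ := rfl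
        rw [hq, this, Fin.snoc_castSucc, ih i h']
      · have hin : i = n := by omega
        subst hin
        have : (⟨i, h⟩ : Fin (i+1)) = Fin.last i := rfl
        rw [hq, this, Fin.snoc_last]
  have ext_eq : ∀ n i, i < n → ext n (q n) i = w i := by
    intro n i h
    simp only [ext, dif_pos h]
    exact coh n i h
  have main : ∀ n, Q n (w n) ∧ ∀ i, i < n → R (w n) (w i) := by
    intro n
    induction n using Nat.strong_induction_on with
    | _ n ih =>
      have hyp : ∀ i, i < n → Q i (ext n (q n) i) := by
        intro i h
        rw [ext_eq n i h]
        exact (ih i h).1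
      have := hF n (ext n (q n)) hyp
      refine ⟨this.1, fun i h => ?_⟩
      have := this.2 i h
      rwa [ext_eq n i h] at this
  exact ⟨w, fun n => (main n).1, fun i j h => (main j).2 i h⟩

end DeltaPaper
namespace DeltaPaper

theorem dual_sum_apply {M : Type*} [PseudoMetricSpace M] {z : M}
    (m : ℕ → NormedSpace.Dual ℝ ↥(Lip0 M z)) (s : Finset ℕ) (h : ↥(Lip0 M z)) :
    (∑ i ∈ s, m i) h = ∑ i ∈ s, m i h := by
  classical
  induction s using Finset.induction_on with
  | empty => simp only [Finset.sum_empty]; rfl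
  | insert _ _ hx ih =>
      rw [Finset.sum_insert hx, Finset.sum_insert hx, ← ih]; rfl

set_option maxHeartbeats 1600000 in
theorem key_step {M : Type*} [MetricSpace M] {z : M} (f : ↥(Lip0 M z)) (hf : ‖f‖ = 1)
    (hΔ : IsLipWeakStarDeltaPoint f) {ε : ℝ} (hε0 : 0 < ε) (hε1 : ε ≤ 1)
    (k : ℕ) (u v : ℕ → M)
    (hprev : ∀ i, i < k → 1 - ε / (16 * 2 ^ i) < molecule M z (u i) (v i) f) :
    ∃ a b : M, a ≠ b ∧ 1 - ε / (16 * 2 ^ k) < molecule M z a b f ∧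
      ∀ i, i < k → 2 - ε ≤ ‖molecule M z a b - molecule M z (u i) (v i)‖ := by
  rcases Nat.eq_zero_or_pos k with rfl | hk
  · have hc0 : (0:ℝ) ≤ 1 - ε / (16 * 2 ^ 0) := by
      have : ε / (16 * 2 ^ 0) ≤ ε := by rw [pow_zero, mul_one]; linarith [div_le_self hε0.le (by norm_num : (1:ℝ) ≤ 16)]
      linarith
    have hc1 : 1 - ε / (16 * 2 ^ 0) < ‖f‖ := by
      rw [hf]
      have : 0 < ε / (16 * 2 ^ 0) := by positivity
      linarith
    obtain ⟨a, b, hab, hm⟩ := exists_molecule_gt f hc0 hc1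
    exact ⟨a, b, hab, hm, fun i hi => absurd hi (Nat.not_lt_zero i)⟩
  · set m : ℕ → NormedSpace.Dual ℝ ↥(Lip0 M z) := fun i => molecule M z (u i) (v i) with hm
    have hK : (0:ℝ) < (k:ℝ) := by exact_mod_cast hk
    have hK1 : (1:ℝ) ≤ (k:ℝ) := by exact_mod_cast hk
    set K : ℝ := (k : ℝ) with hKdef
    set ν : NormedSpace.Dual ℝ ↥(Lip0 M z) := K⁻¹ • ∑ i ∈ Finset.range k, m i with hν
    have hν_apply : ∀ h : ↥(Lip0 M z), ν h = K⁻¹ * ∑ i ∈ Finset.range k, m i h := by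
      intro h
      have e1 : ν h = K⁻¹ * (∑ i ∈ Finset.range k, m i) h := rfl
      rw [e1, dual_sum_apply]
    have hmle : ∀ i, ‖m i‖ ≤ 1 := fun i => norm_molecule_le _ _
    have hν_le : ‖ν‖ ≤ 1 := by
      rw [hν, norm_smul, Real.norm_eq_abs, abs_of_nonneg (inv_nonneg.2 hK.le)]
      have h1 : ‖∑ i ∈ Finset.range k, m i‖ ≤ K := by
        calc ‖∑ i ∈ Finset.range k, m i‖ ≤ ∑ i ∈ Finset.range k, ‖m i‖ :=
              norm_sum_le _ _
          _ ≤ ∑ _i ∈ Finset.range k, (1:ℝ) := Finset.sum_le_sum (fun i _ => hmle i)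
          _ = K := by simp [hKdef]
      calc K⁻¹ * ‖∑ i ∈ Finset.range k, m i‖ ≤ K⁻¹ * K :=
            mul_le_mul_of_nonneg_left h1 (inv_nonneg.2 hK.le)
        _ = 1 := inv_mul_cancel₀ hK.ne'
    set α : ℝ := ε / (4 * K) with hαdef
    have hα : 0 < α := by positivity
    have hα4 : 4 * K * α = ε := by rw [hαdef]; field_simp
    have hα14 : α ≤ 1 / 4 := by
      rw [hαdef, div_le_div_iff₀ (by positivity) (by norm_num)]
      nlinarith
    have hδsum : ∑ i ∈ Finset.range k, ε / (16 * 2 ^ i) ≤ ε / 8 := by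
      have he : ∀ i : ℕ, ε / (16 * 2 ^ i) = (ε / 16) * (1 / 2 : ℝ) ^ i := by
        intro i
        rw [div_pow, one_pow, div_mul_div_comm, mul_one]
      calc ∑ i ∈ Finset.range k, ε / (16 * 2 ^ i)
          = (ε / 16) * ∑ i ∈ Finset.range k, (1 / 2 : ℝ) ^ i := by
            rw [Finset.mul_sum]; exact Finset.sum_congr rfl fun i _ => he i
        _ ≤ (ε / 16) * 2 :=
            mul_le_mul_of_nonneg_left (sum_geometric_two_le k) (by positivity)
        _ = ε / 8 := by ring
    have hsum : K - ε / 8 < ∑ i ∈ Finset.range k, m i f := by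
      have h1 : ∑ i ∈ Finset.range k, (1 - ε / (16 * 2 ^ i)) <
          ∑ i ∈ Finset.range k, m i f :=
        Finset.sum_lt_sum_of_nonempty (Finset.nonempty_range_iff.2 hk.ne')
          (fun i hi => hprev i (Finset.mem_range.1 hi))
      have h2 : ∑ i ∈ Finset.range k, (1 - ε / (16 * 2 ^ i)) =
          K - ∑ i ∈ Finset.range k, ε / (16 * 2 ^ i) := by
        rw [Finset.sum_sub_distrib]; simp [hKdef]
      linarith
    have hνf8 : 1 - ε / (8 * K) < ν f := by
      rw [hν_apply]
      have h3 := mul_lt_mul_of_pos_left hsum (inv_pos.2 hK)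
      have e : K⁻¹ * (K - ε / 8) = 1 - ε / (8 * K) := by
        field_simp
      linarith
    have hνf : 1 - α < ν f := by
      have hεα : ε / (8 * K) < α := by
        have h1 : (0:ℝ) < 8 * K := by positivity
        have h2 : (0:ℝ) < 4 * K := by positivity
        rw [hαdef, div_lt_div_iff₀ h1 h2]
        nlinarith
      linarith
    have hνf_pos : 0 < ν f := by linarith
    have hν_ge : ν f ≤ ‖ν‖ := by
      calc ν f ≤ ‖ν f‖ := le_abs_self _
        _ ≤ ‖ν‖ * ‖f‖ := ContinuousLinearMap.le_opNorm _ _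
        _ = ‖ν‖ := by rw [hf, mul_one]
    have hN_pos : 0 < ‖ν‖ := lt_of_lt_of_le hνf_pos hν_ge
    set μ := ‖ν‖⁻¹ • ν with hμ
    have hμ_apply : ∀ h : ↥(Lip0 M z), μ h = ‖ν‖⁻¹ * ν h := fun _ => rfl
    have hμ_norm : ‖μ‖ = 1 := by
      rw [hμ, norm_smul, Real.norm_eq_abs, abs_of_nonneg (inv_nonneg.2 hN_pos.le),
        inv_mul_cancel₀ hN_pos.ne']
    have hμ_mem : μ ∈ FreeSpace M z := by
      refine Submodule.smul_mem _ _ (Submodule.smul_mem _ _ (Submodule.sum_mem _ ?_))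
      exact fun i _ => molecule_mem_freeSpace _ _
    have hμf : 1 - α < μ f := by
      have h1 : ν f ≤ μ f := by
        rw [hμ_apply]
        exact le_mul_of_one_le_left hνf_pos.le ((one_le_inv₀ hN_pos).2 hν_le)
      linarith
    set η : ℝ := ε / (32 * 2 ^ k) with hηdef
    have hη : 0 < η := by positivity
    have h2k : (1:ℝ) ≤ 2 ^ k := one_le_pow₀ one_le_two
    have hη32 : η ≤ ε / 32 := by
      rw [hηdef]
      apply div_le_div_of_nonneg_left hε0.le (by norm_num)
      nlinarith
    obtain ⟨g, hg_le, hgμ, hgf⟩ := hΔ μ hμ_mem hμ_norm α hα hμf η hη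
    have hνg : 1 - 2 * α < ν g := by
      rw [hμ_apply] at hgμ
      have e : ν g = ‖ν‖ * (‖ν‖⁻¹ * ν g) := by
        rw [← mul_assoc, mul_inv_cancel₀ hN_pos.ne', one_mul]
      have h1 : ‖ν‖ * (1 - α) < ‖ν‖ * (‖ν‖⁻¹ * ν g) :=
        mul_lt_mul_of_pos_left hgμ hN_pos
      nlinarith
    have hbig : ∀ i, i < k → 1 - ε / 2 < m i g := by
      intro i hi
      have hsg : K * ν g = ∑ j ∈ Finset.range k, m j g := by
        rw [hν_apply, ← mul_assoc, mul_inv_cancel₀ hK.ne', one_mul]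
      have hrest : ∑ j ∈ (Finset.range k).erase i, m j g ≤ K - 1 := by
        calc ∑ j ∈ (Finset.range k).erase i, m j g
            ≤ ∑ _j ∈ (Finset.range k).erase i, (1:ℝ) := by
              refine Finset.sum_le_sum fun j _ => ?_
              calc m j g ≤ ‖m j g‖ := le_abs_self _
                _ ≤ ‖m j‖ * ‖g‖ := ContinuousLinearMap.le_opNorm _ _
                _ ≤ 1 * 1 := mul_le_mul (hmle j) hg_le (norm_nonneg _)
                    (le_trans (norm_nonneg _) (hmle j))
                _ = 1 := one_mul 1
          _ = K - 1 := by
              rw [Finset.sum_const, nsmul_eq_mul, mul_one,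
                Finset.card_erase_of_mem (Finset.mem_range.2 hi), Finset.card_range,
                hKdef]
              have h1k : (1:ℕ) ≤ k := hk
              push_cast [Nat.cast_sub h1k]
              ring
      have hsplit : m i g + ∑ j ∈ (Finset.range k).erase i, m j g =
          ∑ j ∈ Finset.range k, m j g :=
        Finset.add_sum_erase _ (fun j => m j g) (Finset.mem_range.2 hi)
      have h2 : K * (1 - 2 * α) < K * ν g := mul_lt_mul_of_pos_left hνg hK
      nlinarith
    have hfg_pos : (0:ℝ) ≤ ‖f - g‖ - η := by
      have h1 : 2 - η ≤ ‖f - g‖ := hgf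
      have : η ≤ 1 := by nlinarith
      linarith
    obtain ⟨a, b, hab, hmab⟩ := exists_molecule_gt (f - g) hfg_pos (by linarith [hη])
    have hmab_sub : molecule M z a b (f - g) = molecule M z a b f - molecule M z a b g :=
      molecule_apply_sub a b f g
    have hmabf_le : molecule M z a b f ≤ 1 := by
      calc molecule M z a b f ≤ ‖molecule M z a b f‖ := le_abs_self _
        _ ≤ ‖molecule M z a b‖ * ‖f‖ := ContinuousLinearMap.le_opNorm _ _
        _ ≤ 1 := by rw [hf, mul_one]; exact norm_molecule_le _ _
    have hmabg_ge : -1 ≤ molecule M z a b g := by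
      have h1 : ‖molecule M z a b g‖ ≤ 1 := by
        calc ‖molecule M z a b g‖ ≤ ‖molecule M z a b‖ * ‖g‖ :=
              ContinuousLinearMap.le_opNorm _ _
          _ ≤ 1 * 1 := mul_le_mul (norm_molecule_le _ _) hg_le (norm_nonneg _)
              zero_le_one
          _ = 1 := one_mul 1
      have h2 := abs_le.1 h1
      linarith [h2.1]
    have hFG : 2 - 2 * η < molecule M z a b f - molecule M z a b g := by
      rw [← hmab_sub]
      calc 2 - 2 * η ≤ ‖f - g‖ - η := by linarith [hgf]
        _ < molecule M z a b (f - g) := hmab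
    have hinv : 1 - ε / (16 * 2 ^ k) < molecule M z a b f := by
      have h2η : 2 * η = ε / (16 * 2 ^ k) := by
        rw [hηdef]
        field_simp
        ring
      linarith
    have hmabg_le : molecule M z a b g < -1 + 2 * η := by linarith
    refine ⟨a, b, hab, hinv, fun i hi => ?_⟩
    have hsep : 2 - ε ≤ m i g - molecule M z a b g := by
      have h1 := hbig i hi
      linarith
    calc 2 - ε ≤ m i g - molecule M z a b g := hsep
      _ = (m i - molecule M z a b) g := rfl
      _ ≤ ‖(m i - molecule M z a b) g‖ := le_abs_self _
      _ ≤ ‖m i - molecule M z a b‖ * ‖g‖ := ContinuousLinearMap.le_opNorm _ _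
      _ ≤ ‖m i - molecule M z a b‖ := mul_le_of_le_one_right (norm_nonneg _) hg_le
      _ = ‖molecule M z a b - m i‖ := norm_sub_rev _ _

end DeltaPaper
/-- Proposition 4.1. If `f ∈ S_{Lip₀(M)}` is a w*-Δ-point, then for every
`ε > 0` the slice `S(f, ε)` of `B_{F(M)}` contains a sequence of molecules that are pairwise
at distance at least `2 - ε` from each other. -/
theorem statement9 {M : Type*} [MetricSpace M] (z : M)
    (f : ↥(Lip0 M z)) (hf : ‖f‖ = 1) (hΔ : IsLipWeakStarDeltaPoint f) :
    ∀ ε > (0:ℝ), ∃ u v : ℕ → M, (∀ i, u i ≠ v i) ∧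
      (∀ i, ‖molecule M z (u i) (v i)‖ ≤ 1 ∧ 1 - ε < molecule M z (u i) (v i) f) ∧
      (∀ i j, i ≠ j →
        2 - ε ≤ ‖molecule M z (u i) (v i) - molecule M z (u j) (v j)‖) := by
  intro ε hε
  set ε' : ℝ := min ε 1 with hε'def
  have hε'0 : 0 < ε' := lt_min hε one_pos
  have hε'1 : ε' ≤ 1 := min_le_right _ _
  have hε'ε : ε' ≤ ε := min_le_left _ _
  have hne : Nonempty (M × M) := ⟨(z, z)⟩
  set Q : ℕ → M × M → Prop := fun n p =>
    p.1 ≠ p.2 ∧ 1 - ε' / (16 * 2 ^ n) < molecule M z p.1 p.2 f with hQdef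
  set R : M × M → M × M → Prop := fun p q =>
    2 - ε' ≤ ‖molecule M z p.1 p.2 - molecule M z q.1 q.2‖ with hRdef
  have H : ∀ (k : ℕ) (w : ℕ → M × M), (∀ i, i < k → Q i (w i)) →
      ∃ y, Q k y ∧ ∀ i, i < k → R y (w i) := by
    intro k w hw
    obtain ⟨a, b, hab, h1, h2⟩ := key_step f hf hΔ hε'0 hε'1 k
      (fun i => (w i).1) (fun i => (w i).2) (fun i hi => (hw i hi).2)
    exact ⟨(a, b), ⟨hab, h1⟩, fun i hi => h2 i hi⟩
  obtain ⟨w, hQ, hR⟩ := exists_seq_pairs Q R H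
  refine ⟨fun n => (w n).1, fun n => (w n).2, fun i => (hQ i).1,
    fun i => ⟨norm_molecule_le _ _, ?_⟩, fun i j hij => ?_⟩
  · have h1 := (hQ i).2
    have h2i : (1:ℝ) ≤ 2 ^ i := one_le_pow₀ one_le_two
    have hle : ε' / (16 * 2 ^ i) ≤ ε' := by
      apply div_le_self hε'0.le
      nlinarith
    linarith
  · rcases hij.lt_or_gt with h | h
    · have h1 := hR i j h
      rw [hRdef] at h1
      have h2 : ‖molecule M z (w j).1 (w j).2 - molecule M z (w i).1 (w i).2‖ =
          ‖molecule M z (w i).1 (w i).2 - molecule M z (w j).1 (w j).2‖ :=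
        norm_sub_rev _ _
      rw [h2] at h1
      linarith
    · have h1 := hR j i h
      rw [hRdef] at h1
      linarith
end
end

section
/- Let M be a metric space with base point 0, let ε > 0, and let (m_{u_iv_i})_{i∈ℕ} be a sequence of molecules in F(M) for which there exists a sequence (A_i)_{i∈ℕ} of pairwise disjoint subsets of M such that u_i ∈ A_i and d(u_i,x) + d(v_i,y) ≥ (1 − ε)(d(u_i,v_i) + d(x,y)) for all i ∈ ℕ and all x, y ∈ M \ A_i. Then, viewing each m_{u_iv_i} as an element of Lip_0(M)*, one has limsup_{i→∞} ‖F + m_{u_iv_i}‖ ≥ 2 − 2ε for every F in the unit sphere of the dual space Lip_0(M)*. -/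
open Metric Set Filter NNReal

noncomputable section

open DeltaPaper NormedSpace Filter

open Metric Set Filter

namespace Stmt11Aux

variable {M : Type*} [MetricSpace M]

noncomputable def Tf (f : M → ℝ) (c : ℝ) (A : Set M) (x : M) : ℝ :=
  ⨅ p : ↥(Aᶜ), (f ↑p + c * dist x ↑p)

variable {f : M → ℝ} {c : ℝ} {A : Set M} {u v : M}

theorem bddT (hf : ∀ a b, |f a - f b| ≤ dist a b) (hc : 1 ≤ c) (x : M) :
    BddBelow (Set.range fun p : ↥(Aᶜ) => f ↑p + c * dist x ↑p) := by
  refine ⟨f x, ?_⟩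
  rintro r ⟨p, rfl⟩
  have h1 := (abs_le.mp (hf x ↑p)).2
  have h2 : dist x ↑p ≤ c * dist x ↑p := le_mul_of_one_le_left dist_nonneg hc
  dsimp only
  linarith

theorem f_le_Tf (hA : (Aᶜ).Nonempty) (hf : ∀ a b, |f a - f b| ≤ dist a b) (hc : 1 ≤ c)
    (x : M) : f x ≤ Tf f c A x := by
  haveI : Nonempty ↥(Aᶜ) := hA.to_subtype
  refine le_ciInf fun p => ?_
  have h1 := (abs_le.mp (hf x ↑p)).2
  have h2 : dist x ↑p ≤ c * dist x ↑p := le_mul_of_one_le_left dist_nonneg hc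
  linarith

theorem Tf_le (hf : ∀ a b, |f a - f b| ≤ dist a b) (hc : 1 ≤ c) (x p : M) (hp : p ∉ A) :
    Tf f c A x ≤ f p + c * dist x p :=
  ciInf_le (bddT hf hc x) ⟨p, hp⟩

theorem Tf_lip_os (hA : (Aᶜ).Nonempty) (hf : ∀ a b, |f a - f b| ≤ dist a b) (hc : 1 ≤ c)
    (x y : M) : Tf f c A x ≤ Tf f c A y + c * dist x y := by
  haveI : Nonempty ↥(Aᶜ) := hA.to_subtype
  rw [← sub_le_iff_le_add]
  show _ ≤ ⨅ p : ↥(Aᶜ), (f ↑p + c * dist y ↑p)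
  refine le_ciInf fun p => ?_
  have h1 : Tf f c A x ≤ f ↑p + c * dist x ↑p := ciInf_le (bddT hf hc x) p
  have h2 : dist x ↑p ≤ dist x y + dist y ↑p := dist_triangle _ _ _
  have hc0 : (0:ℝ) ≤ c := le_trans zero_le_one hc
  nlinarith

theorem Tf_lip (hA : (Aᶜ).Nonempty) (hf : ∀ a b, |f a - f b| ≤ dist a b) (hc : 1 ≤ c)
    (x y : M) : |Tf f c A x - Tf f c A y| ≤ c * dist x y := by
  rw [abs_sub_le_iff]
  constructor
  · have := Tf_lip_os hA hf hc x y; linarith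
  · have := Tf_lip_os hA hf hc y x; rw [dist_comm y x] at this; linarith

noncomputable def fI (f : M → ℝ) (c : ℝ) (A : Set M) (u v : M) (x : M) : ℝ :=
  min (Tf f c A x) (Tf f c A u - dist u v + c * dist x v)

theorem fI_lip (hA : (Aᶜ).Nonempty) (hf : ∀ a b, |f a - f b| ≤ dist a b) (hc : 1 ≤ c)
    (x y : M) : |fI f c A u v x - fI f c A u v y| ≤ c * dist x y := by
  have hc0 : (0:ℝ) ≤ c := le_trans zero_le_one hc
  refine le_trans (abs_min_sub_min_le_max _ _ _ _) (max_le (Tf_lip hA hf hc x y) ?_)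
  have he : (Tf f c A u - dist u v + c * dist x v) - (Tf f c A u - dist u v + c * dist y v)
      = c * (dist x v - dist y v) := by ring
  rw [he, abs_mul, abs_of_nonneg hc0]
  exact mul_le_mul_of_nonneg_left (abs_dist_sub_le x y v) hc0

theorem fI_eq_off (hA : (Aᶜ).Nonempty) (hf : ∀ a b, |f a - f b| ≤ dist a b) (hc : 1 ≤ c)
    (hkey : ∀ p ∉ A, ∀ q ∉ A, dist u v + dist p q ≤ c * (dist u p + dist v q))
    (q : M) (hq : q ∉ A) : fI f c A u v q = f q := by
  haveI : Nonempty ↥(Aᶜ) := hA.to_subtype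
  have hTq : Tf f c A q = f q := by
    refine le_antisymm ?_ (f_le_Tf hA hf hc q)
    have := Tf_le hf hc q q hq
    simpa using this
  have h2 : f q ≤ Tf f c A u - dist u v + c * dist q v := by
    rw [show Tf f c A u - dist u v + c * dist q v
        = Tf f c A u - (dist u v - c * dist q v) by ring, le_sub_iff_add_le]
    show _ ≤ ⨅ p : ↥(Aᶜ), (f ↑p + c * dist u ↑p)
    refine le_ciInf fun p => ?_
    have hk := hkey ↑p p.2 q hq
    have h1 := (abs_le.mp (hf q ↑p)).2
    have hcm : dist v q = dist q v := dist_comm _ _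
    have hpq : dist q ↑p = dist ↑p q := dist_comm _ _
    nlinarith
  unfold fI
  rw [hTq, min_eq_left h2]

theorem fI_diff (hA : (Aᶜ).Nonempty) (hf : ∀ a b, |f a - f b| ≤ dist a b) (hc : 1 ≤ c) :
    dist u v ≤ fI f c A u v u - fI f c A u v v := by
  have h1 : fI f c A u v u = Tf f c A u := by
    refine min_eq_left ?_
    have : dist u v ≤ c * dist u v := le_mul_of_one_le_left dist_nonneg hc
    linarith
  have h2 : fI f c A u v v ≤ Tf f c A u - dist u v := by
    have := min_le_right (Tf f c A v) (Tf f c A u - dist u v + c * dist v v)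
    simpa [fI] using this
  linarith

theorem fI_sub_f_lip (hA : (Aᶜ).Nonempty) (hf : ∀ a b, |f a - f b| ≤ dist a b) (hc : 1 ≤ c)
    (x y : M) : |(fI f c A u v x - f x) - (fI f c A u v y - f y)| ≤ (1 + c) * dist x y := by
  have h1 := fI_lip (u := u) (v := v) hA hf hc x y
  have h2 := hf x y
  calc |(fI f c A u v x - f x) - (fI f c A u v y - f y)|
      = |(fI f c A u v x - fI f c A u v y) - (f x - f y)| := by ring_nf
    _ ≤ |fI f c A u v x - fI f c A u v y| + |f x - f y| := abs_sub _ _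
    _ ≤ (1 + c) * dist x y := by linarith

theorem fI_sub_f_bound (hA : (Aᶜ).Nonempty) (hf : ∀ a b, |f a - f b| ≤ dist a b) (hc : 1 ≤ c)
    (hkey : ∀ p ∉ A, ∀ q ∉ A, dist u v + dist p q ≤ c * (dist u p + dist v q))
    (x y : M) (hy : y ∉ A) : |fI f c A u v x - f x| ≤ (1 + c) * dist x y := by
  have h1 := fI_sub_f_lip (u := u) (v := v) hA hf hc x y
  rw [fI_eq_off hA hf hc hkey y hy] at h1
  simpa using h1

end Stmt11Aux

set_option maxHeartbeats 1000000

/-- Proposition 4.3. Let `ε > 0` and let `(m_{u_iv_i})` be a sequence of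
molecules for which there is a sequence `(A_i)` of pairwise disjoint subsets of `M` with
`u_i ∈ A_i` and `d(u_i,x) + d(v_i,y) ≥ (1-ε)(d(u_i,v_i) + d(x,y))` for all `i` and all
`x, y ∉ A_i`. Then `limsup_i ‖F + m_{u_iv_i}‖ ≥ 2 - 2ε` for every `F ∈ S_{Lip₀(M)*}`. -/



theorem statement11 {M : Type*} [MetricSpace M] (z : M) (ε : ℝ) (hε : 0 < ε)
    (u v : ℕ → M) (huv : ∀ i, u i ≠ v i)
    (A : ℕ → Set M) (hdisj : Pairwise fun i j => Disjoint (A i) (A j))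
    (hu : ∀ i, u i ∈ A i)
    (hineq : ∀ i, ∀ x ∉ A i, ∀ y ∉ A i,
      (1 - ε) * (dist (u i) (v i) + dist x y) ≤ dist (u i) x + dist (v i) y)
    (F : Dual ℝ ↥(Lip0 M z)) (hF : ‖F‖ = 1) :
    2 - 2 * ε ≤ limsup (fun i => ‖F + molecule M z (u i) (v i)‖) atTop := by
  classical
  set s := fun i => ‖F + molecule M z (u i) (v i)‖ with hs
  have hd : ∀ i, (0:ℝ) < dist (u i) (v i) := fun i => dist_pos.mpr (huv i)
  have hmol : ∀ i, ‖molecule M z (u i) (v i)‖ ≤ 1 := by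
    intro i
    have hsub : ‖evalδ M z (u i) - evalδ M z (v i)‖ ≤ dist (u i) (v i) := by
      refine ContinuousLinearMap.opNorm_le_bound _ dist_nonneg fun g => ?_
      have hg := (Lip0.lipschitzWith g).dist_le_mul (u i) (v i)
      have he : ((evalδ M z (u i) - evalδ M z (v i)) g)
          = (g : M → ℝ) (u i) - (g : M → ℝ) (v i) := rfl
      rw [he, Real.norm_eq_abs, ← Real.dist_eq, Lip0.norm_def]
      calc dist ((g : M → ℝ) (u i)) ((g : M → ℝ) (v i))
          ≤ (lipConst (g : M → ℝ) : ℝ) * dist (u i) (v i) := hg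
        _ = dist (u i) (v i) * (lipConst (g : M → ℝ) : ℝ) := mul_comm _ _
    rw [molecule, norm_smul, Real.norm_eq_abs, abs_of_nonneg (inv_nonneg.mpr dist_nonneg)]
    calc (dist (u i) (v i))⁻¹ * ‖evalδ M z (u i) - evalδ M z (v i)‖
        ≤ (dist (u i) (v i))⁻¹ * dist (u i) (v i) :=
          mul_le_mul_of_nonneg_left hsub (inv_nonneg.mpr dist_nonneg)
      _ = 1 := inv_mul_cancel₀ (ne_of_gt (hd i))
  have hbdd : IsBoundedUnder (· ≤ ·) atTop s := by
    refine isBoundedUnder_of ⟨2, fun i => ?_⟩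
    calc s i ≤ ‖F‖ + ‖molecule M z (u i) (v i)‖ := norm_add_le _ _
      _ ≤ 2 := by rw [hF]; linarith [hmol i]
  rcases le_or_gt 1 ε with hε1 | hε1
  · have h0 : (0:ℝ) ≤ limsup s atTop :=
      le_limsup_of_frequently_le (Frequently.of_forall fun i => norm_nonneg _) hbdd
    linarith
  have h1ε : (0:ℝ) < 1 - ε := by linarith
  set c : ℝ := (1 - ε)⁻¹ with hcdef
  have hc0 : (0:ℝ) ≤ c := inv_nonneg.mpr h1ε.le
  have hmulc : (1 - ε) * c = 1 := mul_inv_cancel₀ (ne_of_gt h1ε)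
  have hc1 : 1 ≤ c := by nlinarith
  have hAc : ∀ i, ((A i)ᶜ).Nonempty := fun i =>
    ⟨u (i+1), fun hmem => (Set.disjoint_left.mp (hdisj (by omega : i ≠ i+1)) hmem) (hu (i+1))⟩
  have hkey : ∀ i, ∀ p ∉ A i, ∀ q ∉ A i,
      dist (u i) (v i) + dist p q ≤ c * (dist (u i) p + dist (v i) q) := by
    intro i p hp q hq
    have h := hineq i p hp q hq
    have e1 : c * ((1 - ε) * (dist (u i) (v i) + dist p q))
        = dist (u i) (v i) + dist p q := by
      rw [← mul_assoc, mul_comm c (1 - ε), hmulc, one_mul]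
    calc dist (u i) (v i) + dist p q
        = c * ((1 - ε) * (dist (u i) (v i) + dist p q)) := e1.symm
      _ ≤ c * (dist (u i) p + dist (v i) q) := mul_le_mul_of_nonneg_left h hc0
  suffices Hδ : ∀ δ : ℝ, 0 < δ → δ ≤ 1/2 → (1 - ε) * (2 - 2*δ) ≤ limsup s atTop by
    refine le_of_forall_sub_le fun δ' hδ' => ?_
    have h1 := Hδ (min (δ'/2) (1/2)) (by positivity) (min_le_right _ _)
    have h2 : min (δ'/2) (1/2) ≤ δ'/2 := min_le_left _ _
    have h3 : 0 < min (δ'/2) (1/2) := by positivity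
    nlinarith
  intro δ hδ0 hδhalf
  obtain ⟨f, hf1, hFf⟩ : ∃ f : ↥(Lip0 M z), ‖f‖ ≤ 1 ∧ 1 - δ < F f := by
    by_contra hcon
    push_neg at hcon
    have hFle : ‖F‖ ≤ 1 - δ := by
      refine ContinuousLinearMap.opNorm_le_of_unit_norm (by linarith) fun g hg => ?_
      have h1 := hcon g (le_of_eq hg)
      have h2 := hcon (-g) (by rw [norm_neg]; exact le_of_eq hg)
      rw [map_neg] at h2
      rw [Real.norm_eq_abs, abs_le]
      constructor <;> linarith
    rw [hF] at hFle; linarith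
  have hfLip : ∀ a b : M, |(f : M → ℝ) a - (f : M → ℝ) b| ≤ dist a b := by
    intro a b
    have h := (Lip0.lipschitzWith f).dist_le_mul a b
    rw [Real.dist_eq] at h
    have h2 : (lipConst ((f : ↥(Lip0 M z)) : M → ℝ) : ℝ) ≤ 1 := hf1
    nlinarith [dist_nonneg (x := a) (y := b),
      NNReal.coe_nonneg (lipConst ((f : ↥(Lip0 M z)) : M → ℝ))]
  set fi : ℕ → M → ℝ := fun i => Stmt11Aux.fI (f : M → ℝ) c (A i) (u i) (v i) with hfi
  have hfiz : ∀ i, z ∉ A i → fi i z = 0 := by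
    intro i hz
    rw [hfi]; dsimp only
    rw [Stmt11Aux.fI_eq_off (hAc i) hfLip hc1 (hkey i) z hz, f.2.2]
  have hfiLipW : ∀ i, LipschitzWith c.toNNReal (fi i) := by
    intro i
    rw [lipschitzWith_iff_dist_le_mul]
    intro x y
    rw [Real.dist_eq, Real.coe_toNNReal _ hc0]
    exact Stmt11Aux.fI_lip (hAc i) hfLip hc1 x y
  have hmemh : ∀ i, z ∉ A i → (fun x => fi i x - (f : M → ℝ) x) ∈ Lip0 M z := by
    intro i hz
    refine ⟨⟨(1+c).toNNReal, ?_⟩, ?_⟩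
    · rw [lipschitzWith_iff_dist_le_mul]
      intro x y
      rw [Real.dist_eq, Real.coe_toNNReal _ (by linarith : (0:ℝ) ≤ 1 + c)]
      exact Stmt11Aux.fI_sub_f_lip (hAc i) hfLip hc1 x y
    · show fi i z - (f : M → ℝ) z = 0
      rw [hfiz i hz, f.2.2, sub_zero]
  set hE : ℕ → ↥(Lip0 M z) := fun i =>
    if h : z ∈ A i then 0 else ⟨fun x => fi i x - (f : M → ℝ) x, hmemh i h⟩ with hhE
  have hEcoe : ∀ i, z ∉ A i → ((hE i : M → ℝ)) = fun x => fi i x - (f : M → ℝ) x := by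
    intro i hz; rw [hhE]; dsimp only; rw [dif_neg hz]
  have hEbad : ∀ i, z ∈ A i → (hE i) = 0 := by
    intro i hz; rw [hhE]; dsimp only; rw [dif_pos hz]
  have hP1 : ∀ i (x : M), x ∉ A i → (hE i : M → ℝ) x = 0 := by
    intro i x hx
    by_cases hz : z ∈ A i
    · rw [hEbad i hz]; rfl
    · rw [hEcoe i hz]; dsimp only
      simp only [hfi]
      rw [Stmt11Aux.fI_eq_off (hAc i) hfLip hc1 (hkey i) x hx, sub_self]
  have hP2 : ∀ i (x y : M), y ∉ A i → |(hE i : M → ℝ) x| ≤ (1+c) * dist x y := by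
    intro i x y hy
    by_cases hz : z ∈ A i
    · rw [hEbad i hz]
      show |(0:ℝ)| ≤ _
      rw [abs_zero]
      exact mul_nonneg (by linarith) dist_nonneg
    · rw [hEcoe i hz]
      exact Stmt11Aux.fI_sub_f_bound (hAc i) hfLip hc1 (hkey i) x y hy
  have hP3 : ∀ i (x y : M), |(hE i : M → ℝ) x - (hE i : M → ℝ) y| ≤ (1+c) * dist x y := by
    intro i x y
    by_cases hz : z ∈ A i
    · rw [hEbad i hz]
      show |(0:ℝ) - 0| ≤ _
      rw [sub_zero, abs_zero]
      exact mul_nonneg (by linarith) dist_nonneg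
    · rw [hEcoe i hz]
      exact Stmt11Aux.fI_sub_f_lip (hAc i) hfLip hc1 x y
  set σ : ℕ → ℝ := fun i => if 0 ≤ F (hE i) then 1 else -1 with hσ
  have hσabs : ∀ i, |σ i| = 1 := by
    intro i; rw [hσ]; dsimp only; split <;> simp
  have hσval : ∀ i, σ i * F (hE i) = |F (hE i)| := by
    intro i; rw [hσ]; dsimp only
    split
    · rw [one_mul, abs_of_nonneg ‹_›]
    · rw [abs_of_neg (lt_of_not_ge ‹_›)]; ring
  have hsumb : ∀ S : Finset ℕ, (∑ i ∈ S, |F (hE i)|) ≤ 2 * (1 + c) := by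
    intro S
    set HS : ↥(Lip0 M z) := ∑ i ∈ S, σ i • hE i with hHS
    have hco : ∀ x : M, (HS : M → ℝ) x = ∑ i ∈ S, σ i * (hE i : M → ℝ) x := by
      intro x
      have h1 : (HS : M → ℝ) = (Lip0 M z).subtype HS := rfl
      rw [h1, hHS, map_sum, Finset.sum_apply]
      refine Finset.sum_congr rfl fun i _ => rfl
    have h1pc : (0:ℝ) ≤ 1 + c := by linarith
    have hcol : ∀ (x : M) (i₀ : ℕ), i₀ ∈ S → x ∈ A i₀ →
        (∑ i ∈ S, σ i * (hE i : M → ℝ) x) = σ i₀ * (hE i₀ : M → ℝ) x := by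
      intro x i₀ hi₀S hxi₀
      refine Finset.sum_eq_single_of_mem i₀ hi₀S fun j hjS hji => ?_
      have hxj : x ∉ A j := fun hxj => (Set.disjoint_left.mp (hdisj hji) hxj) hxi₀
      rw [hP1 j x hxj, mul_zero]
    have hzero : ∀ (x : M), (∀ j ∈ S, x ∉ A j) →
        (∑ i ∈ S, σ i * (hE i : M → ℝ) x) = 0 := by
      intro x hx
      exact Finset.sum_eq_zero fun j hj => by rw [hP1 j x (hx j hj), mul_zero]
    have hmix : ∀ x y : M, (∃ i ∈ S, x ∈ A i) → (∀ j ∈ S, y ∉ A j) →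
        |(∑ i ∈ S, σ i * (hE i : M → ℝ) x) - (∑ i ∈ S, σ i * (hE i : M → ℝ) y)|
          ≤ 2*(1+c) * dist x y := by
      rintro x y ⟨i₀, hi₀S, hxi₀⟩ hy
      rw [hcol x i₀ hi₀S hxi₀, hzero y hy, sub_zero, abs_mul, hσabs, one_mul]
      have h := hP2 i₀ x y (hy i₀ hi₀S)
      nlinarith [mul_nonneg h1pc (dist_nonneg (x := x) (y := y))]
    have hlipS : ∀ x y : M, |(HS : M → ℝ) x - (HS : M → ℝ) y| ≤ (2*(1+c)) * dist x y := by
      intro x y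
      rw [hco x, hco y]
      by_cases hx : ∃ i ∈ S, x ∈ A i
      · obtain ⟨i₀, hi₀S, hxi₀⟩ := hx
        by_cases hy : ∃ j ∈ S, y ∈ A j
        · obtain ⟨j₀, hj₀S, hyj₀⟩ := hy
          rw [hcol x i₀ hi₀S hxi₀, hcol y j₀ hj₀S hyj₀]
          by_cases hij : i₀ = j₀
          · subst hij
            rw [← mul_sub, abs_mul, hσabs, one_mul]
            have h := hP3 i₀ x y
            nlinarith [mul_nonneg h1pc (dist_nonneg (x := x) (y := y))]
          · have hyni : y ∉ A i₀ := Set.disjoint_right.mp (hdisj hij) hyj₀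
            have hxnj : x ∉ A j₀ := Set.disjoint_left.mp (hdisj hij) hxi₀
            have b1 := hP2 i₀ x y hyni
            have b2 := hP2 j₀ y x hxnj
            rw [dist_comm y x] at b2
            calc |σ i₀ * (hE i₀ : M → ℝ) x - σ j₀ * (hE j₀ : M → ℝ) y|
                ≤ |σ i₀ * (hE i₀ : M → ℝ) x| + |σ j₀ * (hE j₀ : M → ℝ) y| := abs_sub _ _
              _ = |(hE i₀ : M → ℝ) x| + |(hE j₀ : M → ℝ) y| := by
                  rw [abs_mul, abs_mul, hσabs, hσabs, one_mul, one_mul]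
              _ ≤ 2*(1+c) * dist x y := by linarith
        · push_neg at hy
          exact hmix x y ⟨i₀, hi₀S, hxi₀⟩ hy
      · push_neg at hx
        by_cases hy : ∃ j ∈ S, y ∈ A j
        · have h := hmix y x hy hx
          rw [dist_comm y x] at h
          rw [abs_sub_comm]; exact h
        · push_neg at hy
          rw [hzero x hx, hzero y hy, sub_zero, abs_zero]
          exact mul_nonneg (by linarith) dist_nonneg
    have hnormS : ‖HS‖ ≤ 2 * (1 + c) := by
      rw [Lip0.norm_def]
      have hlw : LipschitzWith (2*(1+c)).toNNReal (HS : M → ℝ) := by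
        rw [lipschitzWith_iff_dist_le_mul]
        intro x y
        rw [Real.dist_eq, Real.coe_toNNReal _ (by linarith : (0:ℝ) ≤ 2*(1+c))]
        exact hlipS x y
      have h := lipConst_le hlw
      calc ((lipConst (HS : M → ℝ) : ℝ≥0) : ℝ) ≤ ((2*(1+c)).toNNReal : ℝ) := by
            exact_mod_cast h
        _ = 2*(1+c) := Real.coe_toNNReal _ (by linarith)
    calc (∑ i ∈ S, |F (hE i)|) = ∑ i ∈ S, σ i * F (hE i) :=
          Finset.sum_congr rfl fun i _ => (hσval i).symm
      _ = F HS := by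
          rw [hHS, map_sum]
          refine Finset.sum_congr rfl fun i _ => ?_
          rw [map_smul]; rfl
      _ ≤ |F HS| := le_abs_self _
      _ ≤ ‖F‖ * ‖HS‖ := by rw [← Real.norm_eq_abs]; exact F.le_opNorm HS
      _ = ‖HS‖ := by rw [hF, one_mul]
      _ ≤ 2*(1+c) := hnormS
  have hsummable : Summable fun i => |F (hE i)| :=
    summable_of_sum_range_le (fun n => abs_nonneg _) (fun n => hsumb _)
  have hsmall : ∀ᶠ i in atTop, |F (hE i)| < δ :=
    hsummable.tendsto_atTop_zero.eventually_lt_const hδ0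
  have hgoodz : ∀ᶠ i in atTop, z ∉ A i := by
    have hfin : {i : ℕ | z ∈ A i}.Finite := by
      refine Set.Subsingleton.finite fun i hi j hj => ?_
      by_contra hne
      exact (Set.disjoint_left.mp (hdisj hne) hi) hj
    rw [← Nat.cofinite_eq_atTop]
    exact hfin.eventually_cofinite_notMem
  have hev : ∀ᶠ i in atTop, (1-ε) * (2 - 2*δ) ≤ s i := by
    filter_upwards [hsmall, hgoodz] with i hFi hzi
    set gi : ↥(Lip0 M z) := (1-ε) • (f + hE i) with hgi
    have hgco : ∀ x : M, (gi : M → ℝ) x = (1-ε) * fi i x := by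
      intro x
      have h1 : (gi : M → ℝ) x = (1-ε) * ((f : M → ℝ) x + (hE i : M → ℝ) x) := rfl
      rw [h1, hEcoe i hzi]
      dsimp only
      ring
    have hgnorm : ‖gi‖ ≤ 1 := by
      have h2 : ‖f + hE i‖ ≤ c := by
        have hfun : (((f + hE i : ↥(Lip0 M z))) : M → ℝ) = fi i := by
          funext x
          have h1 : (((f + hE i : ↥(Lip0 M z))) : M → ℝ) x
              = (f : M → ℝ) x + (hE i : M → ℝ) x := rfl
          rw [h1, hEcoe i hzi]; dsimp only; ring
        rw [Lip0.norm_def]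
        have hlw : LipschitzWith c.toNNReal (((f + hE i : ↥(Lip0 M z))) : M → ℝ) := by
          rw [hfun]; exact hfiLipW i
        have h := lipConst_le hlw
        calc ((lipConst (((f + hE i : ↥(Lip0 M z))) : M → ℝ) : ℝ≥0) : ℝ)
            ≤ (c.toNNReal : ℝ) := by exact_mod_cast h
          _ = c := Real.coe_toNNReal _ hc0
      calc ‖gi‖ ≤ ‖(1-ε)‖ * ‖f + hE i‖ := _root_.norm_smul_le _ _
        _ ≤ (1-ε) * c := by
            rw [Real.norm_eq_abs, abs_of_nonneg h1ε.le]
            exact mul_le_mul_of_nonneg_left h2 h1ε.le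
        _ = 1 := hmulc
    have happ : (1-ε)*(2-2*δ) ≤ (F + molecule M z (u i) (v i)) gi := by
      have hFgi : F gi = (1-ε) * (F f + F (hE i)) := by
        rw [hgi, map_smul, map_add]; rfl
      have hmgi : (1-ε) ≤ molecule M z (u i) (v i) gi := by
        have happly : molecule M z (u i) (v i) gi
            = (dist (u i) (v i))⁻¹ * ((gi : M → ℝ) (u i) - (gi : M → ℝ) (v i)) := rfl
        rw [happly, hgco, hgco]
        have hdiff := Stmt11Aux.fI_diff (u := u i) (v := v i) (f := (f : M → ℝ))
          (c := c) (A := A i) (hAc i) hfLip hc1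
        rw [show (1-ε) * fi i (u i) - (1-ε) * fi i (v i)
            = (1-ε) * (fi i (u i) - fi i (v i)) by ring]
        have h3 : (1-ε) * dist (u i) (v i) ≤ (1-ε) * (fi i (u i) - fi i (v i)) :=
          mul_le_mul_of_nonneg_left hdiff h1ε.le
        have hne := ne_of_gt (hd i)
        calc (1-ε) = (dist (u i) (v i))⁻¹ * ((1-ε) * dist (u i) (v i)) := by
              rw [mul_comm (1-ε), ← mul_assoc, inv_mul_cancel₀ hne, one_mul]
          _ ≤ (dist (u i) (v i))⁻¹ * ((1-ε) * (fi i (u i) - fi i (v i))) :=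
              mul_le_mul_of_nonneg_left h3 (inv_nonneg.mpr dist_nonneg)
      have habs : -δ < F (hE i) := (abs_lt.mp hFi).1
      have hadd : (F + molecule M z (u i) (v i)) gi
          = F gi + molecule M z (u i) (v i) gi := rfl
      rw [hadd, hFgi]
      have e1 : (1-ε)*(1-δ) ≤ (1-ε) * F f := mul_le_mul_of_nonneg_left hFf.le h1ε.le
      have e2 : (1-ε)*(-δ) ≤ (1-ε) * F (hE i) := mul_le_mul_of_nonneg_left habs.le h1ε.le
      nlinarith [e1, e2, hmgi]
    calc (1-ε)*(2-2*δ) ≤ (F + molecule M z (u i) (v i)) gi := happ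
      _ ≤ |(F + molecule M z (u i) (v i)) gi| := le_abs_self _
      _ ≤ ‖F + molecule M z (u i) (v i)‖ * ‖gi‖ := by
          rw [← Real.norm_eq_abs]; exact ContinuousLinearMap.le_opNorm _ _
      _ ≤ ‖F + molecule M z (u i) (v i)‖ * 1 :=
          mul_le_mul_of_nonneg_left hgnorm (norm_nonneg _)
      _ = s i := mul_one _
  exact le_limsup_of_frequently_le hev.frequently hbdd
end
end

section
/- Let M be a metric space with base point 0 and let ε > 0. Then d(u,x) + d(v,y) ≥ (1 − ε)(d(u,v) + d(x,y)) for all a > 0, all u ∈ B(0, 8a), all v ∈ B(0, 8a) \ B(0, 4a), and all x, y ∈ (M \ B(0, 32a/ε)) ∪ B(0, aε). -/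
open Metric Set Filter NNReal

noncomputable section

open Metric

/-- Lemma 4.5. For every `ε > 0` one has
`d(u,x) + d(v,y) ≥ (1-ε)(d(u,v) + d(x,y))` for all `a > 0`, `u ∈ B(0,8a)`,
`v ∈ B(0,8a) \ B(0,4a)` and `x, y ∈ (M \ B(0,32a/ε)) ∪ B(0,aε)`. -/
theorem statement13 {M : Type*} [MetricSpace M] (z : M) (ε : ℝ) (hε : 0 < ε) :
    ∀ a > (0:ℝ), ∀ u ∈ closedBall z (8 * a),
      ∀ v ∈ closedBall z (8 * a) \ closedBall z (4 * a),
        ∀ x ∈ (closedBall z (32 * a / ε))ᶜ ∪ closedBall z (a * ε),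
          ∀ y ∈ (closedBall z (32 * a / ε))ᶜ ∪ closedBall z (a * ε),
            (1 - ε) * (dist u v + dist x y) ≤ dist u x + dist v y := by
  
  intro a ha u hu v hv x hx y hy
  rw [Set.mem_diff] at hv
  obtain ⟨hv1, hv2⟩ := hv
  rw [mem_closedBall] at hu hv1
  rw [mem_closedBall, not_le] at hv2
  rw [Set.mem_union, Set.mem_compl_iff, mem_closedBall, mem_closedBall, not_le] at hx hy
  have t1 : dist x z ≤ dist x u + dist u z := dist_triangle x u z
  have t2 : dist y z ≤ dist y v + dist v z := dist_triangle y v z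
  have t3 : dist u v ≤ dist u z + dist z v := dist_triangle u z v
  have t4 : dist x y ≤ dist x z + dist z y := dist_triangle x z y
  have t5 : dist u v ≤ dist u x + dist x y + dist y v :=
    (dist_triangle u x v).trans (by have := dist_triangle x y v; linarith)
  have t6 : dist v z ≤ dist v y + dist y z := dist_triangle v y z
  have t7 : dist x y ≤ dist x u + dist u v + dist v y :=
    (dist_triangle x u y).trans (by have := dist_triangle u v y; linarith)
  have e1 : dist x u = dist u x := dist_comm x u
  have e2 : dist y v = dist v y := dist_comm y v
  have e3 : dist z v = dist v z := dist_comm z v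
  have e4 : dist z y = dist y z := dist_comm z y
  have n1 : (0:ℝ) ≤ dist u x := dist_nonneg
  have n2 : (0:ℝ) ≤ dist v y := dist_nonneg
  have n3 : (0:ℝ) ≤ dist u v := dist_nonneg
  have n4 : (0:ℝ) ≤ dist x y := dist_nonneg
  rcases le_or_gt 1 ε with hε1 | hε1
  · nlinarith [mul_nonneg (sub_nonneg.mpr hε1) (add_nonneg n3 n4)]
  · rcases hx with hx | hx <;> rcases hy with hy | hy
    · -- both far
      have hx' : 32 * a < ε * dist x z := by
        rw [div_lt_iff₀ hε] at hx; linarith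
      have hy' : 32 * a < ε * dist y z := by
        rw [div_lt_iff₀ hε] at hy; linarith
      nlinarith [mul_nonneg hε.le n3, mul_nonneg (sub_nonneg.mpr hε1.le) n3]
    · -- x far, y near
      have hx' : 32 * a < ε * dist x z := by
        rw [div_lt_iff₀ hε] at hx; linarith
      nlinarith [mul_nonneg hε.le n3, mul_nonneg (sub_nonneg.mpr hε1.le) n2,
        mul_nonneg hε.le n1, mul_pos hε ha]
    · -- x near, y far
      have hy' : 32 * a < ε * dist y z := by
        rw [div_lt_iff₀ hε] at hy; linarith
      nlinarith [mul_nonneg hε.le n3, mul_nonneg (sub_nonneg.mpr hε1.le) n1,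
        mul_nonneg hε.le n2, mul_pos hε ha]
    · -- both near
      rcases le_or_gt (dist u v) (4 * a) with hs | hs
      · have p1 : (1 - ε) * (dist u v + dist x y) ≤ (1 - ε) * (4 * a + 2 * (a * ε)) := by
          apply mul_le_mul_of_nonneg_left (by linarith) (by linarith)
        have p2 : (1 - ε) * (4 * a + 2 * (a * ε)) = 4 * a - 2 * (a * ε) - 2 * (a * ε * ε) := by
          ring
        have p3 : 0 < a * ε * ε := by positivity
        linarith
      · nlinarith [mul_nonneg hε.le (sub_nonneg.mpr hs.le), mul_pos hε ha]
end
end
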